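/- Let f : [0,∞) → ℝ be twice differentiable and μ-strongly convex (i.e., inf_t f''(t) = μ > 0). For any π ∈ (0,1), c ∈ (0,1), and any r : ℝ^d → [0,∞), the classifier h_c = sign(πr − c) satisfies R_{π,c}(h_c) − R*_{π,c} ≤ π √( (2/μ) B_f(r* ∥ r) ), where r*(x) = p_+(x)/p(x). -/

import Mathlib

open MeasureTheory Real

/-- The sign function mapping to `{±1}`. -/
noncomputable def sgn (x : ℝ) : ℝ := if 0 < x then 1 else -1

/-- Cost-sensitive classification risk with class-prior `pr` and false-positive cost `c`,
for class-conditional distributions `Pp` (positive) and `Pm` (negative). -/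
noncomputable def costRisk {d : ℕ} (Pp Pm : Measure (Fin d → ℝ)) (pr c : ℝ)
    (g : (Fin d → ℝ) → ℝ) : ℝ :=
  (1 - c) * pr * (Pp {x | sgn (g x) ≠ 1}).toReal
    + c * (1 - pr) * (Pm {x | sgn (g x) ≠ -1}).toReal

/-- Bayes-optimal cost-sensitive risk: infimum over all measurable decision functions. -/
noncomputable def bayesRisk {d : ℕ} (Pp Pm : Measure (Fin d → ℝ)) (pr c : ℝ) : ℝ :=
  ⨅ g : {g : (Fin d → ℝ) → ℝ // Measurable g}, costRisk Pp Pm pr c g.1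

/-- Bregman divergence `B_f(r* ∥ r)` weighted by the distribution `P`. -/
noncomputable def bregman {d : ℕ} (P : Measure (Fin d → ℝ)) (f : ℝ → ℝ)
    (rstar r : (Fin d → ℝ) → ℝ) : ℝ :=
  ∫ x, (f (rstar x) - f (r x) - deriv f (r x) * (rstar x - r x)) ∂P

lemma strong_tangent {f : ℝ → ℝ} {μ : ℝ} (hf : ContDiff ℝ 2 f)
    (hsc : ∀ t, 0 ≤ t → μ ≤ deriv (deriv f) t) {s t : ℝ} (hs : 0 ≤ s) (ht : 0 ≤ t) :
    μ / 2 * (s - t)^2 ≤ f s - f t - deriv f t * (s - t) := by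
  have hfd : Differentiable ℝ f := hf.differentiable (by norm_num)
  have hfd' : Differentiable ℝ (deriv f) := by
    have := (contDiff_succ_iff_deriv (n := 1)).1 (by exact_mod_cast hf)
    exact this.2.2.differentiable (by norm_num)
  set g : ℝ → ℝ := fun u => f u - μ/2 * u^2 with hg
  have hg' : deriv g = fun u => deriv f u - μ * u := by
    funext u
    have h1 : HasDerivAt g (deriv f u - μ * u) u := by
      have h2 : HasDerivAt (fun u : ℝ => μ/2 * u^2) (μ * u) u := by
        have := (hasDerivAt_pow 2 u).const_mul (μ/2)
        exact this.congr_deriv (by push_cast; ring)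
      exact ((hfd u).hasDerivAt.sub h2)
    exact h1.deriv
  have hgd : Differentiable ℝ g := fun u => ((hfd u).sub ((differentiable_pow 2).const_mul (μ/2) u))
  have hg'' : ∀ u, deriv (deriv g) u = deriv (deriv f) u - μ := by
    intro u
    rw [hg']
    have h1 : HasDerivAt (fun u => deriv f u - μ * u) (deriv (deriv f) u - μ) u := by
      have h2 : HasDerivAt (fun u : ℝ => μ * u) μ u := by
        simpa using (hasDerivAt_id u).const_mul μ
      exact (hfd' u).hasDerivAt.sub h2
    exact h1.deriv
  have hconv : ConvexOn ℝ (Set.Ici (0:ℝ)) g := by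
    apply convexOn_of_deriv2_nonneg (convex_Ici 0) hgd.continuous.continuousOn
      hgd.differentiableOn
    · rw [hg']
      exact (hfd'.sub ((differentiable_id).const_mul μ)).differentiableOn
    · intro x hx
      have : deriv^[2] g x = deriv (deriv g) x := rfl
      rw [this, hg'' x]
      have := hsc x (le_of_lt (by simpa using hx))
      linarith
  rcases lt_trichotomy t s with h | h | h
  · have := hconv.deriv_le_slope (Set.mem_Ici.2 ht) (Set.mem_Ici.2 hs) h (hgd t)
    rw [slope_def_field, hg'] at this
    have hts : (0:ℝ) < s - t := by linarith
    simp only at this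
    rw [le_div_iff₀ hts] at this
    simp only [hg] at this
    nlinarith [this]
  · subst h; simp
  · have := hconv.slope_le_deriv (Set.mem_Ici.2 hs) (Set.mem_Ici.2 ht) h (hgd t)
    rw [slope_def_field, hg'] at this
    have hts : (0:ℝ) < t - s := by linarith
    simp only at this
    rw [div_le_iff₀ hts] at this
    simp only [hg] at this
    nlinarith [this]

/-- excess cost-sensitive risk bounded by Bregman divergence of DRE. -/
theorem excess_risk_bregman_bound {d : ℕ} (Pp Pm P : Measure (Fin d → ℝ))
    [IsProbabilityMeasure Pp] [IsProbabilityMeasure Pm] [IsProbabilityMeasure P]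
    (pr c μ : ℝ) (hpr : pr ∈ Set.Ioo (0:ℝ) 1) (hc : c ∈ Set.Ioo (0:ℝ) 1) (hμ : 0 < μ)
    (f : ℝ → ℝ) (hf : ContDiff ℝ 2 f)
    (hsc : ∀ t, 0 ≤ t → μ ≤ deriv (deriv f) t)
    (rstar r : (Fin d → ℝ) → ℝ) (hrstar : Measurable rstar) (hr : Measurable r)
    (hrstar0 : ∀ x, 0 ≤ rstar x) (hr0 : ∀ x, 0 ≤ r x)
    (hmix : P = ENNReal.ofReal pr • Pp + ENNReal.ofReal (1 - pr) • Pm)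
    (hratio : ∀ S : Set (Fin d → ℝ), MeasurableSet S →
      (Pp S).toReal = ∫ x in S, rstar x ∂P)
    (hint : Integrable
      (fun x => f (rstar x) - f (r x) - deriv f (r x) * (rstar x - r x)) P) :
    costRisk Pp Pm pr c (fun x => pr * r x - c) - bayesRisk Pp Pm pr c
      ≤ pr * Real.sqrt ((2 / μ) * bregman P f rstar r) := by
  obtain ⟨hpr0, hpr1⟩ := hpr
  obtain ⟨hc0, hc1⟩ := hc
  -- set identities for sgn
  have hset1 : ∀ (g : (Fin d → ℝ) → ℝ), {x | sgn (g x) ≠ 1} = {x | g x ≤ 0} := by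
    intro g; ext x
    simp only [Set.mem_setOf_eq, sgn]
    by_cases h : 0 < g x
    · simp [h, not_le.2 h]
    · simp [h, le_of_not_gt h]
      norm_num
  have hset2 : ∀ (g : (Fin d → ℝ) → ℝ), {x | sgn (g x) ≠ -1} = {x | 0 < g x} := by
    intro g; ext x
    simp only [Set.mem_setOf_eq, sgn]
    by_cases h : 0 < g x
    · simp [h]; norm_num
    · simp [h]
  have hA : ∀ {g : (Fin d → ℝ) → ℝ}, Measurable g → MeasurableSet {x | g x ≤ 0} :=
    fun hg => measurableSet_le hg measurable_const
  have hA' : ∀ {g : (Fin d → ℝ) → ℝ}, Measurable g → MeasurableSet {x | 0 < g x} :=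
    fun hg => measurableSet_lt measurable_const hg
  -- rstar is integrable with integral 1
  have hone : ∫ x, rstar x ∂P = 1 := by
    have := hratio Set.univ MeasurableSet.univ
    rw [measure_univ, Measure.restrict_univ] at this
    simpa using this.symm
  have hrint : Integrable rstar P := by
    by_contra h; rw [integral_undef h] at hone; norm_num at hone
  -- formula for Pm
  have hPm : ∀ S : Set (Fin d → ℝ), MeasurableSet S →
      (1 - pr) * (Pm S).toReal = ∫ x in S, (1 - pr * rstar x) ∂P := by
    intro S hS
    have h1 : (P S).toReal = pr * (Pp S).toReal + (1 - pr) * (Pm S).toReal := by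
      rw [hmix]
      simp only [Measure.coe_add, Measure.coe_smul, Pi.add_apply, Pi.smul_apply,
        smul_eq_mul]
      rw [ENNReal.toReal_add (by finiteness) (by finiteness), ENNReal.toReal_mul,
        ENNReal.toReal_mul, ENNReal.toReal_ofReal hpr0.le,
        ENNReal.toReal_ofReal (by linarith)]
    have h2 : ∫ x in S, (1 - pr * rstar x) ∂P = (P S).toReal - pr * (Pp S).toReal := by
      rw [integral_sub (integrable_const 1) ((hrint.restrict).const_mul pr),
        integral_const_mul, setIntegral_const, ← hratio S hS]
      simp [smul_eq_mul, Measure.real]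
    rw [h2, h1]; ring
  -- costRisk as an integral
  have hcost : ∀ (g : (Fin d → ℝ) → ℝ), Measurable g →
      costRisk Pp Pm pr c g
        = (∫ x in {x | g x ≤ 0}, (1 - c) * pr * rstar x ∂P)
          + ∫ x in {x | 0 < g x}, c * (1 - pr * rstar x) ∂P := by
    intro g hg
    unfold costRisk
    rw [hset1 g, hset2 g, hratio _ (hA hg), mul_assoc c (1 - pr), hPm _ (hA' hg),
      ← integral_const_mul, ← integral_const_mul]
  -- integrabilities
  have ha_int : Integrable (fun x => (1 - c) * pr * rstar x) P := hrint.const_mul _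
  have hb_int : Integrable (fun x => c * (1 - pr * rstar x)) P :=
    ((integrable_const 1).sub (hrint.const_mul pr)).const_mul c
  have hmin_int : Integrable
      (fun x => min ((1 - c) * pr * rstar x) (c * (1 - pr * rstar x))) P := by
    have := ha_int.inf hb_int
    simpa [Pi.inf_def] using this
  -- lower bound for every classifier
  have hL : ∀ (g : (Fin d → ℝ) → ℝ), Measurable g →
      (∫ x, min ((1 - c) * pr * rstar x) (c * (1 - pr * rstar x)) ∂P)
        ≤ costRisk Pp Pm pr c g := by
    intro g hg
    rw [hcost g hg]
    have hcompl : {x | 0 < g x} = {x | g x ≤ 0}ᶜ := by ext x; simp [not_le]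
    rw [← integral_add_compl (hA hg) hmin_int, ← hcompl]
    refine add_le_add ?_ ?_
    · exact setIntegral_mono_on hmin_int.integrableOn ha_int.integrableOn (hA hg)
        (fun x _ => min_le_left _ _)
    · exact setIntegral_mono_on hmin_int.integrableOn hb_int.integrableOn (hA' hg)
        (fun x _ => min_le_right _ _)
  have hbayes : (∫ x, min ((1 - c) * pr * rstar x) (c * (1 - pr * rstar x)) ∂P)
      ≤ bayesRisk Pp Pm pr c := by
    haveI : Nonempty {g : (Fin d → ℝ) → ℝ // Measurable g} :=
      ⟨⟨fun _ => 0, measurable_const⟩⟩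
    exact le_ciInf fun g => hL g.1 g.2
  -- square integrability of the difference
  have hu2_int : Integrable (fun x => (rstar x - r x)^2) P := by
    apply Integrable.mono (hint.const_mul (2/μ))
      (((hrstar.sub hr).pow_const 2).aestronglyMeasurable)
    filter_upwards with x
    have hkey := strong_tangent hf hsc (hrstar0 x) (hr0 x)
    have hD0 : 0 ≤ f (rstar x) - f (r x) - deriv f (r x) * (rstar x - r x) := by
      nlinarith [sq_nonneg (rstar x - r x)]
    rw [Real.norm_eq_abs, Real.norm_eq_abs, abs_of_nonneg (sq_nonneg _),
      abs_of_nonneg (by positivity : (0:ℝ) ≤ 2/μ * (f (rstar x) - f (r x) - deriv f (r x) * (rstar x - r x)))]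
    have h2 : (2/μ) * (μ/2 * (rstar x - r x)^2) = (rstar x - r x)^2 := by
      field_simp
    simp only [Pi.sub_apply]
    nlinarith [mul_le_mul_of_nonneg_left hkey (by positivity : (0:ℝ) ≤ 2/μ)]
  have habs_int : Integrable (fun x => |rstar x - r x|) P := by
    apply Integrable.mono ((integrable_const (1:ℝ)).add hu2_int)
      ((hrstar.sub hr).abs.aestronglyMeasurable)
    filter_upwards with x
    simp only [Real.norm_eq_abs, abs_abs, Pi.add_apply, Pi.sub_apply]
    rw [abs_of_nonneg (by positivity : (0:ℝ) ≤ (1:ℝ) + (rstar x - r x)^2)]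
    nlinarith [sq_nonneg (|rstar x - r x| - 1), sq_abs (rstar x - r x)]
  -- plug-in classifier bound
  have hplug : costRisk Pp Pm pr c (fun x => pr * r x - c)
      ≤ (∫ x, min ((1 - c) * pr * rstar x) (c * (1 - pr * rstar x)) ∂P)
        + pr * ∫ x, |rstar x - r x| ∂P := by
    have hmeas : Measurable (fun x => pr * r x - c) := (hr.const_mul pr).sub measurable_const
    rw [hcost _ hmeas]
    have hψint : Integrable (fun x =>
        min ((1 - c) * pr * rstar x) (c * (1 - pr * rstar x)) + pr * |rstar x - r x|) P :=
      hmin_int.add (habs_int.const_mul pr)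
    have h1 : ∫ x in {x | pr * r x - c ≤ 0}, (1 - c) * pr * rstar x ∂P
        ≤ ∫ x in {x | pr * r x - c ≤ 0}, (min ((1 - c) * pr * rstar x) (c * (1 - pr * rstar x)) + pr * |rstar x - r x|) ∂P := by
      apply setIntegral_mono_on ha_int.integrableOn hψint.integrableOn (hA hmeas)
      intro x hx
      simp only [Set.mem_setOf_eq] at hx
      rcases le_total ((1 - c) * pr * rstar x) (c * (1 - pr * rstar x)) with h | h
      · rw [min_eq_left h]
        nlinarith [abs_nonneg (rstar x - r x)]
      · rw [min_eq_right h]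
        rcases abs_cases (rstar x - r x) with ⟨he, _⟩ | ⟨he, _⟩ <;> nlinarith
    have h2 : ∫ x in {x | 0 < pr * r x - c}, c * (1 - pr * rstar x) ∂P
        ≤ ∫ x in {x | 0 < pr * r x - c}, (min ((1 - c) * pr * rstar x) (c * (1 - pr * rstar x)) + pr * |rstar x - r x|) ∂P := by
      apply setIntegral_mono_on hb_int.integrableOn hψint.integrableOn (hA' hmeas)
      intro x hx
      simp only [Set.mem_setOf_eq] at hx
      rcases le_total (c * (1 - pr * rstar x)) ((1 - c) * pr * rstar x) with h | h
      · rw [min_eq_right h]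
        nlinarith [abs_nonneg (rstar x - r x)]
      · rw [min_eq_left h]
        rcases abs_cases (rstar x - r x) with ⟨he, _⟩ | ⟨he, _⟩ <;> nlinarith
    have hcompl : {x | 0 < pr * r x - c} = {x | pr * r x - c ≤ 0}ᶜ := by ext x; simp [not_le]
    have hsum : (∫ x in {x | pr * r x - c ≤ 0}, (min ((1 - c) * pr * rstar x) (c * (1 - pr * rstar x)) + pr * |rstar x - r x|) ∂P)
        + (∫ x in {x | 0 < pr * r x - c}, (min ((1 - c) * pr * rstar x) (c * (1 - pr * rstar x)) + pr * |rstar x - r x|) ∂P)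
        = (∫ x, min ((1 - c) * pr * rstar x) (c * (1 - pr * rstar x)) ∂P)
          + pr * ∫ x, |rstar x - r x| ∂P := by
      rw [hcompl, integral_add_compl (hA hmeas) hψint,
        integral_add hmin_int (habs_int.const_mul pr), integral_const_mul]
    linarith [h1, h2]
  -- L² bound via Bregman divergence
  have hsq : ∫ x, (rstar x - r x)^2 ∂P ≤ (2/μ) * bregman P f rstar r := by
    have hmono := integral_mono hu2_int (hint.const_mul (2/μ)) (fun x => by
      have hkey := strong_tangent hf hsc (hrstar0 x) (hr0 x)
      have h2 : (2/μ) * (μ/2 * (rstar x - r x)^2) = (rstar x - r x)^2 := by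
        field_simp
      nlinarith [mul_le_mul_of_nonneg_left hkey (by positivity : (0:ℝ) ≤ 2/μ)])
    rwa [integral_const_mul] at hmono
  have habs_le : ∫ x, |rstar x - r x| ∂P ≤ Real.sqrt ((2/μ) * bregman P f rstar r) := by
    set m := ∫ x, |rstar x - r x| ∂P with hm
    have hm0 : 0 ≤ m := integral_nonneg fun x => abs_nonneg _
    have hexp : ∫ x, (|rstar x - r x| - m)^2 ∂P = (∫ x, (rstar x - r x)^2 ∂P) - m^2 := by
      have e1 : Integrable (fun x => 2*m * |rstar x - r x|) P := habs_int.const_mul (2*m)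
      have e2 : Integrable (fun x => (rstar x - r x)^2 - 2*m * |rstar x - r x|) P :=
        hu2_int.sub e1
      have hptw : ∀ x, (|rstar x - r x| - m)^2
          = (rstar x - r x)^2 - 2*m * |rstar x - r x| + m^2 := fun x => by
        rw [sub_sq, sq_abs]; ring
      simp_rw [hptw]
      rw [integral_add e2 (integrable_const _), integral_sub hu2_int e1,
        integral_const_mul, integral_const]
      simp [measure_univ, smul_eq_mul]
      ring
    have hnn : 0 ≤ ∫ x, (|rstar x - r x| - m)^2 ∂P := integral_nonneg fun x => sq_nonneg _
    have hm2 : m^2 ≤ (2/μ) * bregman P f rstar r := by linarith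
    exact Real.le_sqrt_of_sq_le hm2
  calc costRisk Pp Pm pr c (fun x => pr * r x - c) - bayesRisk Pp Pm pr c
      ≤ costRisk Pp Pm pr c (fun x => pr * r x - c)
        - ∫ x, min ((1 - c) * pr * rstar x) (c * (1 - pr * rstar x)) ∂P :=
        sub_le_sub_left hbayes _
    _ ≤ pr * ∫ x, |rstar x - r x| ∂P := by linarith [hplug]
    _ ≤ pr * Real.sqrt ((2/μ) * bregman P f rstar r) :=
        mul_le_mul_of_nonneg_left habs_le hpr0.le
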